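/- Let A_1, ..., A_N ∈ ℝ^{n×n}, let i ≥ 1, and let 𝒫_i ∈ ℝ^{ñ_i×ñ_i} be symmetric with 𝒫_i Ãⁱ(A_j) + Ãⁱ(A_j)ᵀ 𝒫_i ≼ 0 for all j = 1, ..., N. Let A : [0,∞) → ℝ^{n×n} take values in the convex hull of {A_1, ..., A_N} and let x : [0,∞) → ℝⁿ be differentiable with x'(t) = A(t) x(t). Then the non-homogeneous polynomial function t ↦ ξ̃_i(x(t))ᵀ 𝒫_i ξ̃_i(x(t)) is nonincreasing on [0,∞); in particular, for every initial condition x(0) = x_0, the set 𝒳_i = {x ∈ ℝⁿ : ξ̃_i(x)ᵀ 𝒫_i ξ̃_i(x) ≤ ξ̃_i(x_0)ᵀ 𝒫_i ξ̃_i(x_0)} contains x(t) for all t ≥ 0. -/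

import Mathlib

open Matrix

noncomputable section

/-- `M ≼ 0` for a (symmetric) matrix: `ξᵀ M ξ ≤ 0` for all `ξ`. -/
def NegSemidef {m : Type*} [Fintype m] (M : Matrix m m ℝ) : Prop :=
  ∀ x : m → ℝ, x ⬝ᵥ M *ᵥ x ≤ 0

/-- Index type for Kronecker powers: `kronIdx n k` indexes the `(k+1)`-st Kronecker power
of an `n`-dimensional object. -/
def kronIdx (n : ℕ) : ℕ → Type
  | 0 => Fin n
  | k+1 => Fin n × kronIdx n k

instance kronIdxFintype (n : ℕ) : ∀ k, Fintype (kronIdx n k)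
  | 0 => inferInstanceAs (Fintype (Fin n))
  | k+1 => @instFintypeProd _ _ _ (kronIdxFintype n k)

instance kronIdxDecEq (n : ℕ) : ∀ k, DecidableEq (kronIdx n k)
  | 0 => inferInstanceAs (DecidableEq (Fin n))
  | k+1 => @instDecidableEqProd _ _ _ (kronIdxDecEq n k)

/-- `matKronPow M k = ⊗^{k+1} M`, the `(k+1)`-st Kronecker power of the matrix `M`
(so `matKronPow M 0 = ⊗¹M = M`). -/
def matKronPow {n : ℕ} (M : Matrix (Fin n) (Fin n) ℝ) : ∀ k, Matrix (kronIdx n k) (kronIdx n k) ℝ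
  | 0 => M
  | k+1 => Matrix.kroneckerMap (· * ·) M (matKronPow M k)

/-- Kronecker product of two vectors. -/
def vecKron {α β : Type*} (u : α → ℝ) (v : β → ℝ) : α × β → ℝ := fun p => u p.1 * v p.2

/-- `vecKronPow x k = ⊗^{k+1} x`, the `(k+1)`-st Kronecker power of the vector `x`. -/
def vecKronPow {n : ℕ} (x : Fin n → ℝ) : ∀ k, kronIdx n k → ℝ
  | 0 => x
  | k+1 => vecKron x (vecKronPow x k)

/-- The lifted matrices: `liftA A k = 𝒜^{k+1}(A)`, with `𝒜¹(A) = A` and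
`𝒜^{k+1}(A) = Iₙ ⊗ 𝒜^k(A) + A ⊗ I_{n^k}`. -/
def liftA {n : ℕ} (A : Matrix (Fin n) (Fin n) ℝ) : ∀ k, Matrix (kronIdx n k) (kronIdx n k) ℝ
  | 0 => A
  | k+1 => Matrix.kroneckerMap (· * ·) (1 : Matrix (Fin n) (Fin n) ℝ) (liftA A k)
      + Matrix.kroneckerMap (· * ·) A (1 : Matrix (kronIdx n k) (kronIdx n k) ℝ)

/-- Index type of the stacked hierarchy system of degree `i`: blocks `k = 0, …, i-1`
corresponding to Kronecker powers `1, …, i`; its cardinality is `ñ_i = n + n² + ⋯ + nⁱ`. -/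
abbrev tildeIdx (n i : ℕ) : Type := Σ k : Fin i, kronIdx n k

/-- `Ãⁱ(A) = diag(𝒜¹(A), 𝒜²(A), …, 𝒜ⁱ(A))`. -/
def tildeA {n : ℕ} (A : Matrix (Fin n) (Fin n) ℝ) (i : ℕ) :
    Matrix (tildeIdx n i) (tildeIdx n i) ℝ :=
  Matrix.blockDiagonal' (fun k : Fin i => liftA A k)

/-- `diag(P, ⊗²P, …, ⊗ⁱP)`. -/
def tildeKronPow {n : ℕ} (P : Matrix (Fin n) (Fin n) ℝ) (i : ℕ) :
    Matrix (tildeIdx n i) (tildeIdx n i) ℝ :=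
  Matrix.blockDiagonal' (fun k : Fin i => matKronPow P k)

/-- `ξ̃_i(x) = (x, ⊗²x, …, ⊗ⁱx)`, the stacked vector of Kronecker powers of `x`. -/
def tildeXi {n : ℕ} (i : ℕ) (x : Fin n → ℝ) : tildeIdx n i → ℝ :=
  fun p => vecKronPow x p.1 p.2


section Helpers

open Finset Kronecker

lemma kron_mulVec {m₁ m₂ : Type*} [Fintype m₁] [Fintype m₂]
    (M : Matrix m₁ m₁ ℝ) (Nm : Matrix m₂ m₂ ℝ) (u : m₁ → ℝ) (v : m₂ → ℝ) :
    (Matrix.kroneckerMap (· * ·) M Nm) *ᵥ vecKron u v = vecKron (M *ᵥ u) (Nm *ᵥ v) := by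
  funext p
  obtain ⟨a, b⟩ := p
  simp only [Matrix.mulVec, dotProduct, vecKron, Matrix.kroneckerMap_apply,
    Fintype.sum_prod_type]
  rw [Finset.sum_mul_sum]
  exact Finset.sum_congr rfl fun c _ => Finset.sum_congr rfl fun d _ => by ring

lemma liftA_add {n : ℕ} (A B : Matrix (Fin n) (Fin n) ℝ) :
    ∀ k, liftA (A + B) k = liftA A k + liftA B k
  | 0 => rfl
  | k+1 => by
    show Matrix.kroneckerMap (· * ·) 1 (liftA (A + B) k)
        + Matrix.kroneckerMap (· * ·) (A + B) 1 = _
    rw [liftA_add A B k]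
    show (1 : Matrix (Fin n) (Fin n) ℝ) ⊗ₖ (liftA A k + liftA B k) + (A + B) ⊗ₖ 1 = _
    rw [Matrix.kronecker_add, Matrix.add_kronecker]
    show _ = (1 : Matrix (Fin n) (Fin n) ℝ) ⊗ₖ liftA A k + A ⊗ₖ 1
        + ((1 : Matrix (Fin n) (Fin n) ℝ) ⊗ₖ liftA B k + B ⊗ₖ 1)
    abel

lemma liftA_smul {n : ℕ} (c : ℝ) (A : Matrix (Fin n) (Fin n) ℝ) :
    ∀ k, liftA (c • A) k = c • liftA A k
  | 0 => rfl
  | k+1 => by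
    show Matrix.kroneckerMap (· * ·) 1 (liftA (c • A) k)
        + Matrix.kroneckerMap (· * ·) (c • A) 1 = _
    rw [liftA_smul c A k]
    show (1 : Matrix (Fin n) (Fin n) ℝ) ⊗ₖ (c • liftA A k) + (c • A) ⊗ₖ 1 = _
    rw [Matrix.kronecker_smul, Matrix.smul_kronecker]
    show _ = c • ((1 : Matrix (Fin n) (Fin n) ℝ) ⊗ₖ liftA A k + A ⊗ₖ 1)
    exact (smul_add _ _ _).symm

lemma tildeA_add {n : ℕ} (A B : Matrix (Fin n) (Fin n) ℝ) (i : ℕ) :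
    tildeA (A + B) i = tildeA A i + tildeA B i := by
  have h : (fun k : Fin i => liftA (A + B) (k : ℕ)) = fun k : Fin i => liftA A k + liftA B k :=
    funext fun k => liftA_add A B k
  rw [tildeA, h]
  exact Matrix.blockDiagonal'_add _ _

lemma tildeA_smul {n : ℕ} (c : ℝ) (A : Matrix (Fin n) (Fin n) ℝ) (i : ℕ) :
    tildeA (c • A) i = c • tildeA A i := by
  have h : (fun k : Fin i => liftA (c • A) (k : ℕ)) = fun k : Fin i => c • liftA A k :=
    funext fun k => liftA_smul c A k
  rw [tildeA, h]
  exact Matrix.blockDiagonal'_smul (R := ℝ) c _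

lemma HasDerivAt.vecKron' {α β : Type*} [Fintype α] [Fintype β]
    {u : ℝ → α → ℝ} {u' : α → ℝ} {v : ℝ → β → ℝ} {v' : β → ℝ} {t : ℝ}
    (hu : HasDerivAt u u' t) (hv : HasDerivAt v v' t) :
    HasDerivAt (fun s => vecKron (u s) (v s)) (vecKron u' (v t) + vecKron (u t) v') t := by
  rw [hasDerivAt_pi]
  rintro ⟨a, b⟩
  have ha := hasDerivAt_pi.1 hu a
  have hb := hasDerivAt_pi.1 hv b
  simpa [vecKron] using ha.fun_mul hb

lemma hasDerivAt_vecKronPow {n : ℕ} {x : ℝ → Fin n → ℝ} {B : Matrix (Fin n) (Fin n) ℝ} {t : ℝ}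
    (hx : HasDerivAt x (B *ᵥ x t) t) :
    ∀ k, HasDerivAt (fun s => vecKronPow (x s) k) (liftA B k *ᵥ vecKronPow (x t) k) t
  | 0 => hx
  | k+1 => by
    have hk := hasDerivAt_vecKronPow hx k
    have h := hx.vecKron' hk
    have heq : vecKron (B *ᵥ x t) (vecKronPow (x t) k)
        + vecKron (x t) (liftA B k *ᵥ vecKronPow (x t) k)
        = liftA B (k+1) *ᵥ vecKronPow (x t) (k+1) := by
      show _ = (Matrix.kroneckerMap (· * ·) 1 (liftA B k)
          + Matrix.kroneckerMap (· * ·) B 1) *ᵥ vecKron (x t) (vecKronPow (x t) k)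
      rw [Matrix.add_mulVec, kron_mulVec, kron_mulVec, Matrix.one_mulVec, Matrix.one_mulVec]
      abel
    rw [← heq]
    exact h

lemma blockDiagonal'_mulVec {ι : Type*} [DecidableEq ι] [Fintype ι] {m : ι → Type*}
    [∀ k, Fintype (m k)] [∀ k, DecidableEq (m k)]
    (M : ∀ k, Matrix (m k) (m k) ℝ) (v : (Σ k, m k) → ℝ) (k : ι) (q : m k) :
    (Matrix.blockDiagonal' M *ᵥ v) ⟨k, q⟩ = (M k *ᵥ fun r => v ⟨k, r⟩) q := by
  simp only [Matrix.mulVec, dotProduct, ]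
  rw [← Finset.univ_sigma_univ, Finset.sum_sigma]
  rw [Finset.sum_eq_single k]
  · exact Finset.sum_congr rfl fun r _ => by rw [Matrix.blockDiagonal'_apply_eq]
  · intro k' _ hk'
    apply Finset.sum_eq_zero
    intro r _
    rw [Matrix.blockDiagonal'_apply_ne _ _ _ hk'.symm, zero_mul]
  · intro h
    exact absurd (Finset.mem_univ k) h

lemma hasDerivAt_tildeXi {n : ℕ} (i : ℕ) {x : ℝ → Fin n → ℝ} {B : Matrix (Fin n) (Fin n) ℝ}
    {t : ℝ} (hx : HasDerivAt x (B *ᵥ x t) t) :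
    HasDerivAt (fun s => tildeXi i (x s)) (tildeA B i *ᵥ tildeXi i (x t)) t := by
  rw [hasDerivAt_pi]
  rintro ⟨k, q⟩
  have h := hasDerivAt_pi.1 (hasDerivAt_vecKronPow hx k) q
  have : (tildeA B i *ᵥ tildeXi i (x t)) ⟨k, q⟩ = (liftA B k *ᵥ vecKronPow (x t) k) q := by
    rw [tildeA, blockDiagonal'_mulVec]
    rfl
  rw [this]
  exact h

lemma hasDerivAt_quad {ι : Type*} [Fintype ι] (P : Matrix ι ι ℝ)
    {ξ : ℝ → ι → ℝ} {ξ' : ι → ℝ} {t : ℝ} (h : HasDerivAt ξ ξ' t) :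
    HasDerivAt (fun s => ξ s ⬝ᵥ P *ᵥ ξ s) (ξ' ⬝ᵥ P *ᵥ ξ t + ξ t ⬝ᵥ P *ᵥ ξ') t := by
  have key : ∀ s, ξ s ⬝ᵥ P *ᵥ ξ s = ∑ p, ∑ q, ξ s p * (P p q * ξ s q) := fun s => by
    simp [dotProduct, Matrix.mulVec, Finset.mul_sum]
  have h1 : HasDerivAt (fun s => ∑ p, ∑ q, ξ s p * (P p q * ξ s q))
      (∑ p, ∑ q, (ξ' p * (P p q * ξ t q) + ξ t p * (P p q * ξ' q))) t := by
    apply HasDerivAt.fun_sum; intro p _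
    apply HasDerivAt.fun_sum; intro q _
    have hp := hasDerivAt_pi.1 h p
    have hq := (hasDerivAt_pi.1 h q).const_mul (P p q)
    simpa using hp.fun_mul hq
  have h2 : (∑ p, ∑ q, (ξ' p * (P p q * ξ t q) + ξ t p * (P p q * ξ' q)))
      = ξ' ⬝ᵥ P *ᵥ ξ t + ξ t ⬝ᵥ P *ᵥ ξ' := by
    simp [dotProduct, Matrix.mulVec, Finset.mul_sum, Finset.sum_add_distrib]
  rw [funext key, ← h2]
  exact h1

lemma quad_split {ι : Type*} [Fintype ι] (P M : Matrix ι ι ℝ) (ξ : ι → ℝ) :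
    (M *ᵥ ξ) ⬝ᵥ P *ᵥ ξ + ξ ⬝ᵥ P *ᵥ (M *ᵥ ξ) = ξ ⬝ᵥ (P * M + Mᵀ * P) *ᵥ ξ := by
  rw [Matrix.add_mulVec, dotProduct_add, ← Matrix.mulVec_mulVec, ← Matrix.mulVec_mulVec,
    Matrix.dotProduct_mulVec ξ Mᵀ, Matrix.vecMul_transpose]
  exact add_comm _ _

lemma convex_quad_nonpos {n N i : ℕ} (As : Fin N → Matrix (Fin n) (Fin n) ℝ)
    (P : Matrix (tildeIdx n i) (tildeIdx n i) ℝ)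
    (hLyap : ∀ j, NegSemidef (P * tildeA (As j) i + (tildeA (As j) i)ᵀ * P))
    {B : Matrix (Fin n) (Fin n) ℝ} (hB : B ∈ convexHull ℝ (Set.range As))
    (ξ : tildeIdx n i → ℝ) :
    ξ ⬝ᵥ (P * tildeA B i + (tildeA B i)ᵀ * P) *ᵥ ξ ≤ 0 := by
  set f : Matrix (Fin n) (Fin n) ℝ →ₗ[ℝ] ℝ :=
    { toFun := fun C => ξ ⬝ᵥ (P * tildeA C i + (tildeA C i)ᵀ * P) *ᵥ ξ
      map_add' := by
        intro C D
        simp only [tildeA_add, Matrix.transpose_add, Matrix.mul_add, Matrix.add_mul,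
          Matrix.add_mulVec, dotProduct_add]
        ring
      map_smul' := by
        intro c C
        simp only [tildeA_smul, Matrix.transpose_smul, Matrix.mul_smul, Matrix.smul_mul,
          RingHom.id_apply]
        rw [← smul_add, Matrix.smul_mulVec, dotProduct_smul, smul_eq_mul] } with hf
  have hsub : convexHull ℝ (Set.range As) ⊆ f ⁻¹' Set.Iic (0:ℝ) :=
    convexHull_min (by rintro _ ⟨j, rfl⟩; exact hLyap j ξ) ((convex_Iic 0).linear_preimage f)
  exact hsub hB

end Helpers

/-- if the symmetric matrix `𝒫_i` satisfies `𝒫_i Ãⁱ(Aⱼ) + Ãⁱ(Aⱼ)ᵀ 𝒫_i ≼ 0` for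
all `j`, `A(t)` evolves in the convex hull of `{A₁, …, A_N}` on `[0,∞)` and `x' = A(t)x`, then
`t ↦ ξ̃_i(x(t))ᵀ 𝒫_i ξ̃_i(x(t))` is nonincreasing on `[0,∞)`; in particular `x(t)` stays in
`𝒳_i = {x : ξ̃_i(x)ᵀ 𝒫_i ξ̃_i(x) ≤ ξ̃_i(x₀)ᵀ 𝒫_i ξ̃_i(x₀)}` for all `t ≥ 0`. -/
theorem stmt12 {n N : ℕ} (As : Fin N → Matrix (Fin n) (Fin n) ℝ) (i : ℕ) (hi : 1 ≤ i)
    (P : Matrix (tildeIdx n i) (tildeIdx n i) ℝ) (hPsymm : P.IsSymm)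
    (hLyap : ∀ j, NegSemidef (P * tildeA (As j) i + (tildeA (As j) i)ᵀ * P))
    (A : ℝ → Matrix (Fin n) (Fin n) ℝ)
    (hA : ∀ t : ℝ, 0 ≤ t → A t ∈ convexHull ℝ (Set.range As))
    (x : ℝ → Fin n → ℝ)
    (hx : ∀ t : ℝ, 0 ≤ t → HasDerivAt x (A t *ᵥ x t) t) :
    AntitoneOn (fun t => tildeXi i (x t) ⬝ᵥ P *ᵥ tildeXi i (x t)) (Set.Ici 0) ∧
    ∀ t : ℝ, 0 ≤ t →
      x t ∈ {v : Fin n → ℝ |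
        tildeXi i v ⬝ᵥ P *ᵥ tildeXi i v ≤ tildeXi i (x 0) ⬝ᵥ P *ᵥ tildeXi i (x 0)} := by
  have hderiv : ∀ t : ℝ, 0 ≤ t → HasDerivAt (fun t => tildeXi i (x t) ⬝ᵥ P *ᵥ tildeXi i (x t))
      (tildeXi i (x t) ⬝ᵥ (P * tildeA (A t) i + (tildeA (A t) i)ᵀ * P) *ᵥ tildeXi i (x t)) t := by
    intro t ht
    have h1 := hasDerivAt_tildeXi i (hx t ht)
    have h2 := hasDerivAt_quad P h1
    rwa [quad_split] at h2
  have hanti : AntitoneOn (fun t => tildeXi i (x t) ⬝ᵥ P *ᵥ tildeXi i (x t)) (Set.Ici 0) := by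
    apply antitoneOn_of_deriv_nonpos (convex_Ici 0)
    · intro t ht
      exact ((hderiv t ht).continuousAt).continuousWithinAt
    · intro t ht
      rw [interior_Ici] at ht
      exact ((hderiv t ht.le).differentiableAt).differentiableWithinAt
    · intro t ht
      rw [interior_Ici] at ht
      rw [(hderiv t ht.le).deriv]
      exact convex_quad_nonpos As P hLyap (hA t ht.le) _
  exact ⟨hanti, fun t ht => hanti Set.self_mem_Ici ht ht⟩
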